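/- arXiv:2004.05432 — 2 statements merged into one kernel-verified Lean document; each statement's English description precedes it below -/
import Mathlib

section
/- For every τ with 0 < τ ≤ 1, ∫₀¹ ∫_{τ − τx}^{τ + (1−τ)x} (1/(x·y)) dy dx = π²/6 + (log τ)²/2 + Li₂(1 − τ), where Li₂(u) = ∑_{n=1}^{∞} uⁿ/n² is the dilogarithm. Equivalently, ∫₀¹ (1/x)·( −log(1 − x) + log((1/τ − 1)x + 1) ) dx = π²/6 + (log τ)²/2 + Li₂(1 − τ). -/
open Real Set MeasureTheory Filter Topology

/-- The dilogarithm `Li₂(u) = ∑_{n≥1} uⁿ/n²`. -/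
noncomputable def Li2 (u : ℝ) : ℝ := ∑' n : ℕ, u ^ (n + 1) / ((n : ℝ) + 1) ^ 2

lemma li2_hasDerivAt {u : ℝ} (hu : |u| < 1) :
    HasDerivAt Li2 (∑' n : ℕ, u ^ n / ((n : ℝ) + 1)) u := by
  set r : ℝ := (1 + |u|) / 2 with hr
  have hr0 : 0 ≤ r := by positivity
  have hur : |u| < r := by rw [hr]; linarith
  have hr1 : r < 1 := by rw [hr]; linarith
  exact hasDerivAt_tsum_of_isPreconnected
    (g := fun (n : ℕ) (x : ℝ) => x ^ (n+1) / ((n:ℝ)+1)^2)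
    (g' := fun (n : ℕ) (x : ℝ) => x ^ n / ((n:ℝ)+1))
    (u := fun n : ℕ => r ^ n) (summable_geometric_of_lt_one hr0 hr1)
    (isOpen_Ioo (a := -r) (b := r)) (convex_Ioo _ _).isPreconnected
    (fun n y _ => by
      have h1 : HasDerivAt (fun x : ℝ => x ^ (n+1)) ((n+1 : ℕ) * y ^ n) y :=
        hasDerivAt_pow (n+1) y
      have h2 := h1.div_const (((n:ℝ)+1)^2)
      have h3 : ((n+1 : ℕ) : ℝ) * y ^ n / ((n:ℝ)+1)^2 = y ^ n / ((n:ℝ)+1) := by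
        have : ((n:ℝ)+1) ≠ 0 := by positivity
        push_cast
        field_simp
      rwa [h3] at h2)
    (fun n y hy => by
      have hy' : |y| ≤ r := by
        rw [abs_le]; exact ⟨by linarith [hy.1], by linarith [hy.2]⟩
      have hb : ‖y ^ n / ((n:ℝ)+1)‖ = |y| ^ n / ((n:ℝ)+1) := by
        rw [Real.norm_eq_abs, abs_div, abs_pow]
        congr 1
        rw [abs_of_pos (by positivity)]
      rw [hb]
      calc |y| ^ n / ((n:ℝ)+1) ≤ r ^ n / ((n:ℝ)+1) := by gcongr
        _ ≤ r ^ n := by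
            rw [div_le_iff₀ (by positivity)]
            nlinarith [pow_nonneg hr0 n])
    (y₀ := 0) (by constructor <;> [linarith [abs_nonneg u]; linarith [abs_nonneg u]])
    (by
      apply summable_of_ne_finset_zero (s := ∅)
      intro n _
      simp)
    (by exact ⟨by linarith [neg_abs_le u], by linarith [le_abs_self u]⟩)

lemma li2_deriv_closed {u : ℝ} (h0 : 0 < u) (h1 : u < 1) :
    HasDerivAt Li2 (-Real.log (1 - u) / u) u := by
  have habs : |u| < 1 := by rw [abs_of_pos h0]; exact h1
  have hs := (hasSum_pow_div_log_of_abs_lt_one habs).mul_left (1 / u)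
  have heq : ∀ n : ℕ, 1 / u * (u ^ (n+1) / ((n:ℝ)+1)) = u ^ n / ((n:ℝ)+1) := by
    intro n
    rw [pow_succ']
    field_simp
  simp_rw [heq] at hs
  have := li2_hasDerivAt habs
  rwa [hs.tsum_eq, show 1 / u * -Real.log (1 - u) = -Real.log (1 - u) / u by ring] at this

lemma li2_zero : Li2 0 = 0 := by
  unfold Li2
  simp

lemma summable_inv_sq : Summable (fun n : ℕ => 1/((n:ℝ)+1)^2) := by
  have h := (Real.summable_one_div_nat_pow (p := 2)).2 one_lt_two
  have := (summable_nat_add_iff 1).2 h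
  simpa using this

lemma tsum_inv_sq : ∑' n : ℕ, 1/((n:ℝ)+1)^2 = Real.pi ^ 2 / 6 := by
  have h := hasSum_zeta_two
  have h' : HasSum (fun n : ℕ => (1:ℝ) / (n : ℝ) ^ 2)
      (Real.pi ^ 2 / 6 + ∑ i ∈ Finset.range 1, (1:ℝ) / (i : ℝ) ^ 2) := by simpa using h
  have h2 := (hasSum_nat_add_iff (f := fun n : ℕ => (1:ℝ) / (n : ℝ) ^ 2) 1).2 h'
  have h3 : HasSum (fun n : ℕ => (1:ℝ) / ((n:ℝ)+1) ^ 2) (Real.pi ^ 2 / 6) := by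
    simpa using h2
  exact h3.tsum_eq

lemma hasSum_neg_log {x : ℝ} (h0 : 0 < x) (h1 : x < 1) :
    HasSum (fun n : ℕ => x ^ n / ((n:ℝ)+1)) (-Real.log (1-x)/x) := by
  have habs : |x| < 1 := by rw [abs_of_pos h0]; exact h1
  have hs := (hasSum_pow_div_log_of_abs_lt_one habs).mul_left (1 / x)
  have heq : ∀ n : ℕ, 1 / x * (x ^ (n+1) / ((n:ℝ)+1)) = x ^ n / ((n:ℝ)+1) := by
    intro n; rw [pow_succ']; field_simp
  simp_rw [heq] at hs
  rwa [show 1 / x * -Real.log (1 - x) = -Real.log (1 - x) / x by ring] at hs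

lemma aux_int_pow (n : ℕ) : ∫ x in Ioc (0:ℝ) 1, x^n/((n:ℝ)+1) = 1/((n:ℝ)+1)^2 := by
  rw [← intervalIntegral.integral_of_le zero_le_one, intervalIntegral.integral_div,
    integral_pow]
  have : ((n:ℝ)+1) ≠ 0 := by positivity
  push_cast
  field_simp
  ring

lemma lint_fn (n : ℕ) : ∫⁻ x in Ioc (0:ℝ) 1, ENNReal.ofReal (x^n/((n:ℝ)+1))
    = ENNReal.ofReal (1/((n:ℝ)+1)^2) := by
  rw [← ofReal_integral_eq_lintegral_ofReal, aux_int_pow]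
  · exact ((continuous_pow n).div_const _).integrableOn_Ioc
  · exact (ae_restrict_iff' measurableSet_Ioc).2 (Filter.Eventually.of_forall
      (fun x hx => by have := hx.1; positivity))

lemma measurable_negloggdiv : Measurable (fun x : ℝ => -Real.log (1-x)/x) :=
  ((Real.measurable_log.comp (measurable_const.sub measurable_id)).neg).div measurable_id

lemma ae_nonneg_negloggdiv : 0 ≤ᵐ[volume.restrict (Ioc (0:ℝ) 1)]
    (fun x : ℝ => -Real.log (1-x)/x) := by
  refine (ae_restrict_iff' measurableSet_Ioc).2 (Filter.Eventually.of_forall fun x hx => ?_)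
  have h0 := hx.1
  have h1 := hx.2
  have : Real.log (1-x) ≤ 0 := Real.log_nonpos (by linarith) (by linarith)
  have : 0 ≤ -Real.log (1-x) := by linarith
  positivity

lemma key_lint : ∫⁻ x in Ioc (0:ℝ) 1, ENNReal.ofReal (-Real.log (1-x)/x)
    = ENNReal.ofReal (Real.pi^2/6) := by
  have h1 : ∀ᵐ x ∂(volume.restrict (Ioc (0:ℝ) 1)), x ≠ 1 := by
    refine ae_restrict_of_ae ?_
    rw [ae_iff]
    simpa using Real.volume_singleton (x := 1)
  have hae : ∀ᵐ x ∂(volume.restrict (Ioc (0:ℝ) 1)),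
      ENNReal.ofReal (-Real.log (1-x)/x) = ∑' n : ℕ, ENNReal.ofReal (x^n/((n:ℝ)+1)) := by
    filter_upwards [ae_restrict_mem measurableSet_Ioc, h1] with x hx hx1
    have h0 := hx.1
    have hlt : x < 1 := lt_of_le_of_ne hx.2 hx1
    have hs := hasSum_neg_log h0 hlt
    rw [← hs.tsum_eq, ENNReal.ofReal_tsum_of_nonneg (fun n => by positivity) hs.summable]
  rw [lintegral_congr_ae hae,
    lintegral_tsum (f := fun (n : ℕ) (a : ℝ) => ENNReal.ofReal (a^n/((n:ℝ)+1)))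
      (fun n => by fun_prop)]
  simp_rw [lint_fn]
  rw [← ENNReal.ofReal_tsum_of_nonneg (fun n => by positivity) summable_inv_sq, tsum_inv_sq]

lemma intA : IntegrableOn (fun x : ℝ => -Real.log (1-x)/x) (Ioc 0 1) volume := by
  refine ⟨measurable_negloggdiv.aestronglyMeasurable, ?_⟩
  rw [hasFiniteIntegral_iff_norm]
  have : ∫⁻ x in Ioc (0:ℝ) 1, ENNReal.ofReal ‖-Real.log (1-x)/x‖
      = ∫⁻ x in Ioc (0:ℝ) 1, ENNReal.ofReal (-Real.log (1-x)/x) := by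
    refine lintegral_congr_ae ?_
    filter_upwards [ae_nonneg_negloggdiv] with x hx
    rw [Real.norm_eq_abs, abs_of_nonneg hx]
  rw [this, key_lint]
  exact ENNReal.ofReal_lt_top

lemma intA_val : ∫ x in (0:ℝ)..1, -Real.log (1-x)/x = Real.pi^2/6 := by
  rw [intervalIntegral.integral_of_le zero_le_one,
    integral_eq_lintegral_of_nonneg_ae ae_nonneg_negloggdiv
      measurable_negloggdiv.aestronglyMeasurable, key_lint,
    ENNReal.toReal_ofReal (by positivity)]

section LemmaB
variable {c : ℝ}

lemma measB (c : ℝ) : Measurable (fun x : ℝ => Real.log (1+c*x)/x) :=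
  (Real.measurable_log.comp (measurable_const.add (measurable_id.const_mul c))).div measurable_id

lemma boundB (hc : 0 ≤ c) {x : ℝ} (hx : x ∈ Ioc (0:ℝ) 1) : ‖Real.log (1+c*x)/x‖ ≤ c := by
  have h0 := hx.1
  have hpos : (0:ℝ) < 1 + c*x := by nlinarith
  have hub : Real.log (1+c*x) ≤ c*x := by
    have := Real.log_le_sub_one_of_pos hpos
    linarith
  have hlb : 0 ≤ Real.log (1+c*x) := Real.log_nonneg (by nlinarith)
  rw [Real.norm_eq_abs, abs_of_nonneg (by positivity)]
  rw [div_le_iff₀ h0]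
  nlinarith

lemma intB (hc : 0 ≤ c) : IntegrableOn (fun x : ℝ => Real.log (1+c*x)/x) (Ioc 0 1) volume := by
  refine Integrable.mono' (integrable_const c) (measB c).aestronglyMeasurable ?_
  exact (ae_restrict_iff' measurableSet_Ioc).2 (Eventually.of_forall fun x hx => boundB hc hx)

lemma intervalIntB (hc : 0 ≤ c) {a b : ℝ} (ha : 0 ≤ a) (hb : b ≤ 1) (hab : a ≤ b) :
    IntervalIntegrable (fun x : ℝ => Real.log (1+c*x)/x) volume a b := by
  rw [intervalIntegrable_iff_integrableOn_Ioc_of_le hab]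
  exact (intB hc).mono_set (Ioc_subset_Ioc ha hb)

lemma hasDerivK (hc : 0 < c) {b : ℝ} (hb : 0 < b) :
    HasDerivAt (fun b => Li2 (c*b/(1+c*b)) + (Real.log (1+c*b))^2/2)
      (Real.log (1+c*b)/b) b := by
  have hd : (0:ℝ) < 1 + c*b := by nlinarith
  have hφpos : 0 < c*b/(1+c*b) := by positivity
  have hφlt : c*b/(1+c*b) < 1 := by rw [div_lt_one hd]; linarith
  have hφ : HasDerivAt (fun b : ℝ => c*b/(1+c*b)) (c/(1+c*b)^2) b := by
    have h1 : HasDerivAt (fun b : ℝ => c*b) c b := by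
      simpa using (hasDerivAt_id b).const_mul c
    have h2 : HasDerivAt (fun b : ℝ => 1+c*b) c b := by
      simpa using h1.const_add 1
    have := h1.div h2 (ne_of_gt hd)
    refine this.congr_deriv ?_
    ring
  have hL := (li2_deriv_closed hφpos hφlt).comp b hφ
  have hlog : HasDerivAt (fun b : ℝ => (Real.log (1+c*b))^2/2)
      (Real.log (1+c*b) * (c/(1+c*b))) b := by
    have h2 : HasDerivAt (fun b : ℝ => 1+c*b) c b := by
      simpa using ((hasDerivAt_id b).const_mul c).const_add 1
    have h3 := (Real.hasDerivAt_log (ne_of_gt hd)).comp b h2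
    have h4 := (h3.pow 2).div_const 2
    refine h4.congr_deriv ?_
    simp only [Function.comp_apply, pow_one]
    push_cast
    ring
  have := hL.add hlog
  refine this.congr_deriv ?_
  have h1m : 1 - c*b/(1+c*b) = 1/(1+c*b) := by field_simp; ring
  rw [h1m, Real.log_div one_ne_zero (ne_of_gt hd), Real.log_one]
  field_simp
  ring

lemma intB_val (hc : 0 ≤ c) :
    ∫ x in (0:ℝ)..1, Real.log (1+c*x)/x = Li2 (c/(1+c)) + (Real.log (1+c))^2/2 := by
  rcases eq_or_lt_of_le hc with hc0 | hc
  · rw [← hc0]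
    norm_num [li2_zero]
  set K : ℝ → ℝ := fun b => Li2 (c*b/(1+c*b)) + (Real.log (1+c*b))^2/2 with hK
  have hFTC : ∀ ε ∈ Ioc (0:ℝ) 1, ∫ x in ε..(1:ℝ), Real.log (1+c*x)/x = K 1 - K ε := by
    intro ε hε
    refine intervalIntegral.integral_eq_sub_of_hasDerivAt (fun b hb => ?_)
      (intervalIntB (le_of_lt hc) (le_of_lt hε.1) le_rfl hε.2)
    rw [uIcc_of_le hε.2] at hb
    exact hasDerivK hc (lt_of_lt_of_le hε.1 hb.1)
  have hsplit : ∀ ε ∈ Ioc (0:ℝ) 1, ∫ x in ε..(1:ℝ), Real.log (1+c*x)/x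
      = (∫ x in (0:ℝ)..1, Real.log (1+c*x)/x) - ∫ x in (0:ℝ)..ε, Real.log (1+c*x)/x := by
    intro ε hε
    rw [← intervalIntegral.integral_add_adjacent_intervals
      (intervalIntB (le_of_lt hc) le_rfl hε.2 (le_of_lt hε.1))
      (intervalIntB (le_of_lt hc) (le_of_lt hε.1) le_rfl hε.2)]
    ring
  have hKcont : Tendsto K (nhdsWithin 0 (Ioi 0)) (𝓝 (K 0)) := by
    have : ContinuousAt K 0 := by
      have hφ : HasDerivAt (fun b : ℝ => c*b/(1+c*b)) (c/(1+c*0)^2) 0 := by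
        have h1 : HasDerivAt (fun b : ℝ => c*b) c 0 := by
          simpa using (hasDerivAt_id (0:ℝ)).const_mul c
        have h2 : HasDerivAt (fun b : ℝ => 1+c*b) c 0 := by simpa using h1.const_add 1
        have := h1.div h2 (by norm_num)
        refine this.congr_deriv ?_
        norm_num
      have hLi : ContinuousAt Li2 (c*0/(1+c*0)) := by
        have : |c*0/(1+c*0)| < 1 := by norm_num
        exact (li2_hasDerivAt this).continuousAt
      have c1 : ContinuousAt (fun b : ℝ => Li2 (c*b/(1+c*b))) 0 :=
        ContinuousAt.comp (g := Li2) (f := fun b : ℝ => c*b/(1+c*b)) hLi hφ.continuousAt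
      have c2 : ContinuousAt (fun b : ℝ => (Real.log (1+c*b))^2/2) 0 := by
        have h2 : ContinuousAt (fun b : ℝ => 1+c*b) 0 := by fun_prop
        have h3 : ContinuousAt Real.log (1+c*0) := Real.continuousAt_log (by norm_num)
        exact ((ContinuousAt.comp (g := Real.log) (f := fun b : ℝ => 1+c*b) h3 h2).pow 2).div_const 2
      exact c1.add c2
    exact this.continuousWithinAt.tendsto
  have hK0 : K 0 = 0 := by
    rw [hK]
    norm_num [li2_zero]
  have hsmall : Tendsto (fun ε => ∫ x in (0:ℝ)..ε, Real.log (1+c*x)/x)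
      (nhdsWithin 0 (Ioi 0)) (𝓝 0) := by
    apply squeeze_zero_norm'
    · filter_upwards [Ioc_mem_nhdsGT_of_mem (by norm_num : (0:ℝ) ∈ Ico (0:ℝ) 1)] with ε hε
      have : ∀ x ∈ Set.uIoc (0:ℝ) ε, ‖Real.log (1+c*x)/x‖ ≤ c := by
        intro x hx
        rw [uIoc_of_le (le_of_lt hε.1)] at hx
        exact boundB (le_of_lt hc) ⟨hx.1, le_trans hx.2 hε.2⟩
      have hb := intervalIntegral.norm_integral_le_of_norm_le_const this
      calc ‖∫ x in (0:ℝ)..ε, Real.log (1+c*x)/x‖ ≤ c * |ε - 0| := hb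
        _ = c * ε := by rw [sub_zero, abs_of_pos hε.1]
    · have : Tendsto (fun ε : ℝ => c * ε) (nhdsWithin 0 (Ioi 0)) (𝓝 (c * 0)) :=
        (tendsto_id.const_mul c).mono_left nhdsWithin_le_nhds
      simpa using this
  have hT1 : Tendsto (fun ε => K 1 - K ε) (nhdsWithin 0 (Ioi 0)) (𝓝 (K 1)) := by
    have := (tendsto_const_nhds (x := K 1) (f := nhdsWithin (0:ℝ) (Ioi 0))).sub hKcont
    rw [hK0, sub_zero] at this
    exact this
  have hT2 : Tendsto (fun ε => K 1 - K ε) (nhdsWithin 0 (Ioi 0))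
      (𝓝 ((∫ x in (0:ℝ)..1, Real.log (1+c*x)/x))) := by
    have heq : ∀ᶠ ε in nhdsWithin 0 (Ioi 0), K 1 - K ε
        = (∫ x in (0:ℝ)..1, Real.log (1+c*x)/x) - ∫ x in (0:ℝ)..ε, Real.log (1+c*x)/x := by
      filter_upwards [Ioc_mem_nhdsGT_of_mem (by norm_num : (0:ℝ) ∈ Ico (0:ℝ) 1)] with ε hε
      rw [← hFTC ε hε, hsplit ε hε]
    rw [Filter.tendsto_congr' heq]
    have := (tendsto_const_nhds (x := (∫ x in (0:ℝ)..1, Real.log (1+c*x)/x))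
      (f := nhdsWithin (0:ℝ) (Ioi 0))).sub hsmall
    simpa using this
  have := tendsto_nhds_unique hT1 hT2
  rw [← this, hK]
  norm_num
end LemmaB

/-- The key integral of the triangle area lower bound:
`∫₀¹∫_{τ-τx}^{τ+(1-τ)x} dy dx/(xy) = π²/6 + (log τ)²/2 + Li₂(1-τ)`. -/
theorem key_triangle_integral (τ : ℝ) (hτ : τ ∈ Set.Ioc (0:ℝ) 1) :
    (∫ x in (0:ℝ)..1, ∫ y in (τ - τ * x)..(τ + (1 - τ) * x), 1 / (x * y)) =
      Real.pi ^ 2 / 6 + (Real.log τ) ^ 2 / 2 + Li2 (1 - τ) ∧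
    (∫ x in (0:ℝ)..1,
        (1 / x) * (-Real.log (1 - x) + Real.log ((1 / τ - 1) * x + 1))) =
      Real.pi ^ 2 / 6 + (Real.log τ) ^ 2 / 2 + Li2 (1 - τ) := by
  obtain ⟨hτ0, hτ1⟩ := hτ
  have hτne : τ ≠ 0 := ne_of_gt hτ0
  set c : ℝ := 1/τ - 1 with hc
  have hτinv : 1 ≤ 1/τ := by rw [le_div_iff₀ hτ0]; linarith
  have hc0 : 0 ≤ c := by rw [hc]; linarith
  have h1c : 1 + c = 1/τ := by rw [hc]; ring
  have harg : c/(1+c) = 1-τ := by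
    rw [h1c, hc]
    field_simp
  have hlog : Real.log (1+c) = -Real.log τ := by rw [h1c, one_div, Real.log_inv]
  -- the second integral
  have hpt : ∀ x : ℝ, (1/x) * (-Real.log (1-x) + Real.log ((1/τ-1)*x+1))
      = -Real.log (1-x)/x + Real.log (1+c*x)/x := by
    intro x
    rw [hc, show (1/τ-1)*x+1 = 1+(1/τ-1)*x by ring]
    ring
  have hIA : IntervalIntegrable (fun x : ℝ => -Real.log (1-x)/x) volume 0 1 :=
    (intervalIntegrable_iff_integrableOn_Ioc_of_le zero_le_one).2 intA
  have hIB : IntervalIntegrable (fun x : ℝ => Real.log (1+c*x)/x) volume 0 1 :=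
    (intervalIntegrable_iff_integrableOn_Ioc_of_le zero_le_one).2 (intB hc0)
  have h2 : (∫ x in (0:ℝ)..1,
      (1 / x) * (-Real.log (1 - x) + Real.log ((1 / τ - 1) * x + 1))) =
      Real.pi ^ 2 / 6 + (Real.log τ) ^ 2 / 2 + Li2 (1 - τ) := by
    rw [intervalIntegral.integral_congr (g := fun x : ℝ =>
      -Real.log (1-x)/x + Real.log (1+c*x)/x) (fun x _ => hpt x)]
    rw [intervalIntegral.integral_add hIA hIB, intA_val, intB_val hc0, harg, hlog]
    ring
  refine ⟨?_, h2⟩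
  rw [← h2]
  apply intervalIntegral.integral_congr_ae
  have hne1 : ∀ᵐ x : ℝ, x ≠ 1 := by
    rw [ae_iff]
    simpa using Real.volume_singleton (x := 1)
  filter_upwards [hne1] with x hx1 hxI
  rw [uIoc_of_le zero_le_one] at hxI
  have h0 : 0 < x := hxI.1
  have h1 : x < 1 := lt_of_le_of_ne hxI.2 hx1
  have ha : 0 < τ - τ * x := by nlinarith
  have hbpos : 0 < τ + (1 - τ) * x := by nlinarith
  have hinner : ∀ y : ℝ, 1/(x*y) = (1/x) * (1/y) := fun y => (one_div_mul_one_div x y).symm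
  simp_rw [hinner]
  rw [intervalIntegral.integral_const_mul, integral_one_div (by
    intro h
    rcases (uIcc_of_le (by nlinarith : τ - τ * x ≤ τ + (1 - τ) * x)) ▸ h with ⟨hl, _⟩
    nlinarith)]
  have hfact : τ + (1 - τ) * x = τ * ((1/τ-1)*x+1) := by field_simp; ring
  have hfac2 : τ - τ * x = τ * (1 - x) := by ring
  have hargpos : 0 < (1/τ-1)*x+1 := by nlinarith
  rw [Real.log_div (ne_of_gt hbpos) (ne_of_gt ha), hfact, hfac2,
    Real.log_mul hτne (ne_of_gt hargpos), Real.log_mul hτne (by nlinarith : (1:ℝ) - x ≠ 0)]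
  ring
end

section
/- For every τ ∈ (0,1), the function G(τ) = ∫₀¹ (1/x)·log((1/τ − 1)x + 1) dx is differentiable at τ with G′(τ) = (log τ)/(τ(1 − τ)). Moreover G′(τ) = −(1/τ²)·∫₀¹ dx/((1/τ − 1)x + 1). -/
open MeasureTheory Real

set_option maxHeartbeats 1000000


/-- Differentiation under the integral sign: the function
`G(τ) = ∫₀¹ (1/x)·log((1/τ - 1)x + 1) dx` is differentiable on `(0,1)` with
`G'(τ) = (log τ)/(τ(1 - τ)) = -(1/τ²)·∫₀¹ dx/((1/τ - 1)x + 1)`. -/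
theorem derivative_of_G (τ : ℝ) (hτ : τ ∈ Set.Ioo (0:ℝ) 1) :
    HasDerivAt (fun t : ℝ => ∫ x in (0:ℝ)..1, (1 / x) * Real.log ((1 / t - 1) * x + 1))
      (Real.log τ / (τ * (1 - τ))) τ ∧
    Real.log τ / (τ * (1 - τ)) =
      -(1 / τ ^ 2) * ∫ x in (0:ℝ)..1, 1 / ((1 / τ - 1) * x + 1) := by
  obtain ⟨hτ0, hτ1⟩ := hτ
  have ha : 0 < 1 / τ - 1 := by
    rw [lt_sub_iff_add_lt, zero_add]
    exact one_lt_one_div hτ0 hτ1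
  -- compute the auxiliary integral
  have hint : (∫ x in (0:ℝ)..1, 1 / ((1 / τ - 1) * x + 1))
      = (1 / τ - 1)⁻¹ * Real.log (1 / τ) := by
    simp only [one_div ((1 / τ - 1) * _ + 1)]
    rw [show (fun x : ℝ => ((1 / τ - 1) * x + 1)⁻¹) = (fun x => (fun u : ℝ => u⁻¹) ((1/τ-1) * x + 1)) from rfl]
    rw [intervalIntegral.integral_comp_mul_add (fun u : ℝ => u⁻¹) (ne_of_gt ha) 1,
      integral_inv]
    · rw [mul_zero, zero_add, mul_one, smul_eq_mul]
      congr 1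
      rw [sub_add_cancel]
      simp
    · rw [mul_zero, zero_add, mul_one, sub_add_cancel]
      intro h
      rcases Set.mem_uIcc.mp h with ⟨h1, _⟩ | ⟨_, h2⟩
      · linarith
      · have : 0 < 1 / τ := by positivity
        linarith
  have heq : Real.log τ / (τ * (1 - τ)) =
      -(1 / τ ^ 2) * ∫ x in (0:ℝ)..1, 1 / ((1 / τ - 1) * x + 1) := by
    rw [hint, one_div τ, Real.log_inv]
    have h1 : (1:ℝ) - τ ≠ 0 := by linarith
    field_simp
  refine ⟨?_, heq⟩
  set ε : ℝ := min τ (1 - τ) / 2 with hε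
  have hε0 : 0 < ε := by
    have : 0 < min τ (1 - τ) := lt_min hτ0 (by linarith)
    positivity
  have hball : ∀ t ∈ Metric.ball τ ε, τ / 2 ≤ t ∧ t < 1 ∧ 0 < t := by
    intro t ht
    rw [Metric.mem_ball, Real.dist_eq, abs_lt] at ht
    have h1 : ε ≤ τ / 2 := by
      have := min_le_left τ (1 - τ); rw [hε]; linarith
    have h2 : ε ≤ (1 - τ) / 2 := by
      have := min_le_right τ (1 - τ); rw [hε]; linarith
    refine ⟨by linarith, by linarith, by linarith⟩
  have key := intervalIntegral.hasDerivAt_integral_of_dominated_loc_of_deriv_le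
    (F := fun t x => (1 / x) * Real.log ((1 / t - 1) * x + 1))
    (F' := fun t x => -(1 / t ^ 2) * (1 / ((1 / t - 1) * x + 1)))
    (a := (0:ℝ)) (b := 1) (x₀ := τ) (μ := volume)
    (bound := fun _ => 4 / τ ^ 2) (Metric.ball_mem_nhds τ hε0)
    ?_ ?_ ?_ ?_ ?_ ?_
  · -- conclude
    have h2 : (∫ x in (0:ℝ)..1, -(1 / τ ^ 2) * (1 / ((1 / τ - 1) * x + 1)))
        = Real.log τ / (τ * (1 - τ)) := by
      rw [intervalIntegral.integral_const_mul, ← heq]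
    rw [← h2]
    exact key.2
  · -- measurability of F t for t near τ
    filter_upwards with t
    exact ((measurable_const.div measurable_id).mul
      (Real.measurable_log.comp ((measurable_const.mul measurable_id).add_const 1))).aestronglyMeasurable
  · -- integrability of F τ
    rw [intervalIntegrable_iff_integrableOn_Ioc_of_le zero_le_one]
    refine Integrable.mono' (integrable_const (1 / τ - 1)) ?_ ?_
    · exact ((measurable_const.div measurable_id).mul
        (Real.measurable_log.comp ((measurable_const.mul measurable_id).add_const 1))).aestronglyMeasurable
    · filter_upwards [ae_restrict_mem measurableSet_Ioc] with x hx
      obtain ⟨hx0, hx1⟩ := hx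
      have hpos : 0 < (1 / τ - 1) * x + 1 := by positivity
      have hlog0 : 0 ≤ Real.log ((1 / τ - 1) * x + 1) :=
        Real.log_nonneg (by nlinarith)
      have hlogle : Real.log ((1 / τ - 1) * x + 1) ≤ (1 / τ - 1) * x := by
        have := Real.log_le_sub_one_of_pos hpos
        linarith
      rw [Real.norm_eq_abs, abs_of_nonneg (by positivity)]
      rw [div_mul_eq_mul_div, one_mul, div_le_iff₀ hx0]
      calc Real.log ((1 / τ - 1) * x + 1) ≤ (1 / τ - 1) * x := hlogle
        _ = (1 / τ - 1) * x := rfl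
  · -- measurability of F' τ
    exact (measurable_const.mul (measurable_const.div
      ((measurable_const.mul measurable_id).add_const 1))).aestronglyMeasurable
  · -- bound
    filter_upwards with x hx t ht
    rw [Set.uIoc_of_le zero_le_one] at hx
    obtain ⟨hx0, hx1⟩ := hx
    obtain ⟨ht1, ht2, ht3⟩ := hball t ht
    have hat : 0 < 1 / t - 1 := by
      rw [lt_sub_iff_add_lt, zero_add]
      exact one_lt_one_div ht3 ht2
    have hden : 1 ≤ (1 / t - 1) * x + 1 := by nlinarith
    have hden0 : 0 < (1 / t - 1) * x + 1 := by linarith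
    rw [norm_mul, norm_neg, Real.norm_eq_abs, Real.norm_eq_abs,
      abs_of_nonneg (by positivity : (0:ℝ) ≤ 1 / t ^ 2),
      abs_of_nonneg (by positivity : (0:ℝ) ≤ 1 / ((1 / t - 1) * x + 1))]
    have h1 : 1 / ((1 / t - 1) * x + 1) ≤ 1 := by
      rw [div_le_one hden0]; exact hden
    have h2 : 1 / t ^ 2 ≤ 4 / τ ^ 2 := by
      rw [div_le_div_iff₀ (by positivity) (by positivity)]
      nlinarith
    calc 1 / t ^ 2 * (1 / ((1 / t - 1) * x + 1)) ≤ 1 / t ^ 2 * 1 :=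
          mul_le_mul_of_nonneg_left h1 (by positivity)
      _ = 1 / t ^ 2 := mul_one _
      _ ≤ 4 / τ ^ 2 := h2
  · -- bound integrable
    exact intervalIntegrable_const
  · -- differentiability a.e.
    filter_upwards with x hx t ht
    rw [Set.uIoc_of_le zero_le_one] at hx
    obtain ⟨hx0, hx1⟩ := hx
    obtain ⟨ht1, ht2, ht3⟩ := hball t ht
    have hat : 0 < 1 / t - 1 := by
      rw [lt_sub_iff_add_lt, zero_add]
      exact one_lt_one_div ht3 ht2
    have hden0 : 0 < (1 / t - 1) * x + 1 := by positivity
    have hd1 : HasDerivAt (fun s : ℝ => (1 / s - 1) * x + 1)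
        (-(1 / t ^ 2) * x) t := by
      have : HasDerivAt (fun s : ℝ => s⁻¹) (-(t ^ 2)⁻¹) t := hasDerivAt_inv (ne_of_gt ht3)
      have h := (((this.sub_const 1).mul_const x).add_const 1)
      simp only [one_div]
      convert h using 2 <;> ring
    have hd2 : HasDerivAt (fun s : ℝ => Real.log ((1 / s - 1) * x + 1))
        ((-(1 / t ^ 2) * x) / ((1 / t - 1) * x + 1)) t :=
      hd1.log (ne_of_gt hden0)
    have hd3 := hd2.const_mul (1 / x)
    refine hd3.congr_deriv (Eq.symm ?_)
    have hx' : x ≠ 0 := ne_of_gt hx0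
    rw [mul_one_div (-(1 / t ^ 2)), mul_comm (1 / x), mul_one_div, div_div,
      mul_comm ((1 / t - 1) * x + 1) x, mul_comm (-(1 / t ^ 2)) x,
      mul_div_mul_left _ _ hx']
end
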